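/- Suppose the boundary map γ0 : H0^1 → G is bounded with dense but proper range G^{1/2} = ran γ0 ⊊ G, and ker γ0 is dense in H0. Then the restriction γ̂0 := γ0|N0 of γ0 to N0 = ker(δd+1) is injective with range G^{1/2}, and its inverse (γ̂0)^{-1} : G^{1/2} → N0 is an unbounded operator on G (i.e., it is not bounded with respect to the norm of G). -/

import Mathlib

open scoped InnerProductSpace
open ContinuousLinearMap

theorem statement_2
    {H0 H1 G H01 H11 : Type*}
    [NormedAddCommGroup H0] [InnerProductSpace ℂ H0] [CompleteSpace H0]
    [NormedAddCommGroup H1] [InnerProductSpace ℂ H1] [CompleteSpace H1]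
    [NormedAddCommGroup G] [InnerProductSpace ℂ G] [CompleteSpace G]
    [NormedAddCommGroup H01] [InnerProductSpace ℂ H01] [CompleteSpace H01]
    [NormedAddCommGroup H11] [InnerProductSpace ℂ H11] [CompleteSpace H11]
    (ι0 : H01 →L[ℂ] H0) (d : H01 →L[ℂ] H1) (γ0 : H01 →L[ℂ] G)
    (ι1 : H11 →L[ℂ] H1) (δ : H11 →L[ℂ] H0)
    (hι0 : Function.Injective ι0) (hι1 : Function.Injective ι1)
    (hgraph0 : ∀ f g : H01, ⟪f, g⟫_ℂ = ⟪ι0 f, ι0 g⟫_ℂ + ⟪d f, d g⟫_ℂ)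
    (hgraph1 : ∀ f g : H11, ⟪f, g⟫_ℂ = ⟪ι1 f, ι1 g⟫_ℂ + ⟪δ f, δ g⟫_ℂ)
    (hdom : Dense (Set.range ι0))
    (hker : Dense (ι0 '' {f : H01 | γ0 f = 0}))
    (hran : Dense (Set.range γ0))
    (hadj1 : ∀ (g : H11) (f : H01), γ0 f = 0 → ⟪d f, ι1 g⟫_ℂ = ⟪ι0 f, δ g⟫_ℂ)
    (hadj2 : ∀ (g1 : H1) (h0 : H0),
      (∀ f : H01, γ0 f = 0 → ⟪d f, g1⟫_ℂ = ⟪ι0 f, h0⟫_ℂ) →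
      ∃ g : H11, ι1 g = g1 ∧ δ g = h0)
    (hproper : Set.range γ0 ≠ Set.univ)
    : (∀ f f' : H01, (∃ g : H11, ι1 g = d f ∧ δ g = -(ι0 f)) →
        (∃ g : H11, ι1 g = d f' ∧ δ g = -(ι0 f')) → γ0 f = γ0 f' → f = f') ∧
      (γ0 '' {f : H01 | ∃ g : H11, ι1 g = d f ∧ δ g = -(ι0 f)} = Set.range γ0) ∧
      ¬ (∃ C : ℝ, ∀ f : H01, (∃ g : H11, ι1 g = d f ∧ δ g = -(ι0 f)) →
          ‖f‖ ≤ C * ‖γ0 f‖) := by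
  classical
  set K : Submodule ℂ H01 := LinearMap.ker (γ0 : H01 →ₗ[ℂ] G) with hK
  have hKclosed : IsClosed (K : Set H01) := isClosed_ker γ0
  haveI : CompleteSpace K := hKclosed.completeSpace_coe
  -- Key lemma: the "N0" condition is equivalent to orthogonality to ker γ0
  have hA : ∀ f : H01, (∃ g : H11, ι1 g = d f ∧ δ g = -(ι0 f)) ↔ f ∈ Kᗮ := by
    intro f
    constructor
    · rintro ⟨g, hg1, hg2⟩
      rw [Submodule.mem_orthogonal]
      intro u hu
      have hu0 : γ0 u = 0 := hu
      have h1 : ⟪d u, ι1 g⟫_ℂ = ⟪ι0 u, δ g⟫_ℂ := hadj1 g u hu0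
      rw [hg1, hg2, inner_neg_right] at h1
      rw [hgraph0 u f]
      linear_combination h1
    · intro hf
      refine hadj2 (d f) (-(ι0 f)) ?_
      intro u hu
      have h0 : ⟪u, f⟫_ℂ = 0 := (Submodule.mem_orthogonal K f).1 hf u hu
      rw [hgraph0 u f] at h0
      rw [inner_neg_right]
      linear_combination h0
  refine ⟨?_, ?_, ?_⟩
  · -- injectivity
    intro f f' hf hf' hγ
    have h1 : f - f' ∈ Kᗮ := Kᗮ.sub_mem ((hA f).1 hf) ((hA f').1 hf')
    have h2 : f - f' ∈ K := by
      simp only [hK, LinearMap.mem_ker, ContinuousLinearMap.coe_coe, map_sub, hγ, sub_self]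
    have h3 : ⟪f - f', f - f'⟫_ℂ = 0 :=
      (Submodule.mem_orthogonal K (f - f')).1 h1 (f - f') h2
    exact sub_eq_zero.mp (inner_self_eq_zero.mp h3)
  · -- range
    apply Set.Subset.antisymm
    · rintro y ⟨f, -, rfl⟩
      exact ⟨f, rfl⟩
    · rintro y ⟨f, rfl⟩
      obtain ⟨a, ha, b, hb, hab⟩ := K.exists_add_mem_mem_orthogonal f
      refine ⟨b, (hA b).2 hb, ?_⟩
      have ha0 : γ0 a = 0 := ha
      rw [hab, map_add, ha0, zero_add]
  · -- unboundedness
    rintro ⟨C, hC⟩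
    set γ' : Kᗮ →L[ℂ] G := γ0.comp (Kᗮ.subtypeL) with hγ'
    have hbound : ∀ s : Kᗮ, ‖s‖ ≤ (C.toNNReal : ℝ) * ‖γ' s‖ := by
      intro s
      have h1 : ‖(s : H01)‖ ≤ C * ‖γ0 (s : H01)‖ := hC (s : H01) ((hA _).2 s.2)
      have h2 : C * ‖γ0 (s : H01)‖ ≤ (C.toNNReal : ℝ) * ‖γ0 (s : H01)‖ :=
        mul_le_mul_of_nonneg_right (Real.le_coe_toNNReal C) (norm_nonneg _)
      calc ‖s‖ = ‖(s : H01)‖ := rfl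
        _ ≤ (C.toNNReal : ℝ) * ‖γ0 (s : H01)‖ := h1.trans h2
        _ = (C.toNNReal : ℝ) * ‖γ' s‖ := rfl
    have hanti : AntilipschitzWith C.toNNReal γ' :=
      ContinuousLinearMap.antilipschitz_of_bound γ' hbound
    have hclosed : IsClosed (Set.range γ') :=
      hanti.isClosed_range γ'.uniformContinuous
    have hrange : Set.range γ' = Set.range γ0 := by
      ext y
      constructor
      · rintro ⟨s, rfl⟩
        exact ⟨(s : H01), rfl⟩
      · rintro ⟨f, rfl⟩
        obtain ⟨a, ha, b, hb, hab⟩ := K.exists_add_mem_mem_orthogonal f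
        refine ⟨⟨b, hb⟩, ?_⟩
        have ha0 : γ0 a = 0 := ha
        show γ0 b = γ0 f
        rw [hab, map_add, ha0, zero_add]
    rw [hrange] at hclosed
    exact hproper (hclosed.closure_eq ▸ hran.closure_eq)
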